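/- Let Â = A + εA₀ ∈ 𝔻^{n×n} be a square dual matrix and let k be the Drazin index of the real matrix A. Then Â^{2k} = A^{2k} + ε(Σ_{i=0}^{2k−1} Aⁱ·A₀·A^{2k−1−i}) is regular in the ring 𝔻^{n×n}, and Â is Drazin invertible with Drazin index i(Â) ≤ 2k. In particular, every square dual matrix has a Drazin inverse. -/

import Mathlib

/-- The dual matrix `A + ε A₀` over the dual numbers `𝔻 = ℝ[ε]`, `ε² = 0`. -/
def dualMat {m n : ℕ} (A A₀ : Matrix (Fin m) (Fin n) ℝ) :
    Matrix (Fin m) (Fin n) (DualNumber ℝ) :=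
  A.map (fun r => TrivSqZeroExt.inl r) + A₀.map (fun r => TrivSqZeroExt.inr r)

/-- `x` is a Drazin inverse of `a` with exponent `k`:
`a x² = x`, `x a = a x`, `x a^{k+1} = a^k`. -/
def IsDrazinInverse {R : Type*} [Ring R] (a x : R) (k : ℕ) : Prop :=
  a * (x * x) = x ∧ x * a = a * x ∧ x * a ^ (k + 1) = a ^ k

open Finset TrivSqZeroExt
section RingAux
variable {R : Type*} [Ring R]

lemma sum_shift {M : Type*} [AddCommGroup M] (g : ℕ → M) (k : ℕ) (hg : g k = 0) :
    ∑ i ∈ range k, g (i+1) = (∑ i ∈ range k, g i) - g 0 := by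
  have h1 := Finset.sum_range_succ' g k
  have h2 := Finset.sum_range_succ g k
  rw [h2, hg, add_zero] at h1
  exact eq_sub_of_add_eq h1.symm

variable {a x : R} {k : ℕ}

lemma df1 (h2 : x * a = a * x) (h3 : x * a ^ (k+1) = a ^ k) :
    ∀ j, x * a ^ (k+1+j) = a ^ (k+j) := by
  intro j
  induction j with
  | zero => simpa using h3
  | succ j ih =>
    have e : k + 1 + (j+1) = (k+1+j) + 1 := by omega
    rw [e, pow_succ', ← mul_assoc, h2, mul_assoc, ih, ← pow_succ',
      show k + j + 1 = k + (j+1) by omega]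

lemma df1' (h2 : x * a = a * x) (h3 : x * a ^ (k+1) = a ^ k) :
    ∀ j, k ≤ j → x * a ^ (j+1) = a ^ j := by
  intro j hj
  rcases Nat.exists_eq_add_of_le hj with ⟨m, rfl⟩
  rw [show k + m + 1 = k + 1 + m by omega, df1 h2 h3 m]

lemma df2' (h2 : x * a = a * x) (h3 : x * a ^ (k+1) = a ^ k) :
    ∀ j m, k + j ≤ m → x ^ j * a ^ m = a ^ (m - j) := by
  intro j
  induction j with
  | zero => intro m _; simp
  | succ j ih =>
    intro m hm
    have hm1 : m = (m-1)+1 := by omega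
    rw [pow_succ, mul_assoc, hm1, df1' h2 h3 (m-1) (by omega), ih (m-1) (by omega)]
    congr 1
    omega

lemma dax2 (h1 : a * (x * x) = x) : ∀ j, a * x ^ (j+1+1) = x ^ (j+1) := by
  intro j
  have e : x ^ (j+1+1) = x * x * x ^ j := by
    rw [show j+1+1 = 2+j by omega, pow_add, pow_two]
  rw [e, ← mul_assoc, h1, ← pow_succ']

lemma dxa2 (h1 : a * (x * x) = x) (h2 : x * a = a * x) :
    ∀ j, x ^ (j+1+1) * a = x ^ (j+1) := by
  intro j
  have c : Commute a x := h2.symm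
  rw [← (c.pow_right (j+1+1)).eq, dax2 h1 j]

lemma dxp (h1 : a * (x * x) = x) (h2 : x * a = a * x) : x * (1 - a*x) = 0 := by
  rw [mul_sub, mul_one, ← mul_assoc, h2, mul_assoc, h1, sub_self]

lemma dpx (h1 : a * (x * x) = x) : (1 - a*x) * x = 0 := by
  rw [sub_mul, one_mul, mul_assoc, h1, sub_self]

lemma dap (h2 : x * a = a * x) : a * (1 - a*x) = (1 - a*x) * a := by
  rw [mul_sub, sub_mul, mul_one, one_mul, mul_assoc, h2]

lemma dakp (h2 : x * a = a * x) (h3 : x * a ^ (k+1) = a ^ k) :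
    ∀ j, k ≤ j → a ^ j * (1 - a*x) = 0 := by
  intro j hj
  have c : Commute x a := h2
  have e : a ^ j * (a * x) = a ^ j := by
    rw [← mul_assoc, ← pow_succ, ← (c.pow_right (j+1)).eq, df1' h2 h3 j hj]
  rw [mul_sub, mul_one, e, sub_self]

lemma dpak (h2 : x * a = a * x) (h3 : x * a ^ (k+1) = a ^ k) :
    ∀ j, k ≤ j → (1 - a*x) * a ^ j = 0 := by
  intro j hj
  have e : a * x * a ^ j = a ^ j := by
    rw [← h2, mul_assoc, ← pow_succ', df1' h2 h3 j hj]
  rw [sub_mul, one_mul, e, sub_self]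

lemma drazin_reg {m : ℕ} (h : IsDrazinInverse a x m) :
    a ^ m * x ^ m * a ^ m = a ^ m := by
  obtain ⟨h1, h2, h3⟩ := h
  have c : Commute x a := h2
  have key : x ^ m * a ^ (m + m) = a ^ m := by
    have := df2' (k := m) h2 h3 m (m+m) (by omega)
    rwa [show m + m - m = m by omega] at this
  rw [← (c.pow_pow m m).eq, mul_assoc, ← pow_add, key]

end RingAux

theorem ring_key {R : Type*} [Ring R] (a x b : R) (k : ℕ)
    (h1 : a * (x * x) = x) (h2 : x * a = a * x) (h3 : x * a ^ (k+1) = a ^ k) :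
    ∃ z : R,
      (a * (x * z + z * x) + b * (x * x) = z) ∧
      (x * b + z * a = a * z + b * x) ∧
      (x * (∑ i ∈ Finset.range (2*k+1), a ^ i * b * a ^ (2*k+1-1-i)) + z * a ^ (2*k+1)
        = ∑ i ∈ Finset.range (2*k), a ^ i * b * a ^ (2*k-1-i)) := by
  have hdap := dap h2
  have hdax2 := dax2 h1
  have hdxa2 := dxa2 h1 h2
  have hxp := dxp h1 h2
  have hpx := dpx h1
  have hdakp := dakp h2 h3
  have hdpak := dpak h2 h3
  have hdf1 := df1' h2 h3
  have hdf2 := df2' h2 h3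
  refine ⟨-(x*b*x) + (∑ i ∈ Finset.range k, x^(i+1+1)*b*a^i*(1-a*x))
      + (∑ i ∈ Finset.range k, (1-a*x)*a^i*b*x^(i+1+1)), ?_, ?_, ?_⟩
  · -- identity (i)
    set U := ∑ i ∈ Finset.range k, x^(i+1+1)*b*a^i*(1-a*x) with hU
    set V := ∑ i ∈ Finset.range k, (1-a*x)*a^i*b*x^(i+1+1) with hV
    have hxU : x * U = ∑ i ∈ Finset.range k, x^(i+1+1+1)*b*a^i*(1-a*x) := by
      rw [hU, Finset.mul_sum]
      refine Finset.sum_congr rfl fun i _ => ?_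
      rw [← mul_assoc, ← mul_assoc, ← mul_assoc, ← pow_succ']
    have hxV : x * V = 0 := by
      rw [hV, Finset.mul_sum]
      refine Finset.sum_eq_zero fun i _ => ?_
      rw [← mul_assoc, ← mul_assoc, ← mul_assoc, hxp, zero_mul, zero_mul, zero_mul]
    have hUx : U * x = 0 := by
      rw [hU, Finset.sum_mul]
      refine Finset.sum_eq_zero fun i _ => ?_
      rw [mul_assoc, hpx, mul_zero]
    have hVx : V * x = ∑ i ∈ Finset.range k, (1-a*x)*a^i*b*x^(i+1+1+1) := by
      rw [hV, Finset.sum_mul]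
      refine Finset.sum_congr rfl fun i _ => ?_
      rw [mul_assoc, ← pow_succ]
    have hxZ : x * (-(x*b*x) + U + V)
        = -(x*(x*b*x)) + ∑ i ∈ Finset.range k, x^(i+1+1+1)*b*a^i*(1-a*x) := by
      rw [mul_add, mul_add, mul_neg, hxU, hxV, add_zero]
    have hZx : (-(x*b*x) + U + V) * x
        = -(x*b*x*x) + ∑ i ∈ Finset.range k, (1-a*x)*a^i*b*x^(i+1+1+1) := by
      rw [add_mul, add_mul, neg_mul, hUx, hVx, add_zero]
    have haU3 : a * (∑ i ∈ Finset.range k, x^(i+1+1+1)*b*a^i*(1-a*x)) = U := by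
      rw [hU, Finset.mul_sum]
      refine Finset.sum_congr rfl fun i _ => ?_
      rw [← mul_assoc, ← mul_assoc, ← mul_assoc, hdax2 (i+1)]
    have haV3 : a * (∑ i ∈ Finset.range k, (1-a*x)*a^i*b*x^(i+1+1+1))
        = V - (1-a*x)*a^0*b*x^(0+1+1) := by
      calc a * (∑ i ∈ Finset.range k, (1-a*x)*a^i*b*x^(i+1+1+1))
          = ∑ i ∈ Finset.range k, (1-a*x)*a^(i+1)*b*x^(i+1+1+1) := by
            rw [Finset.mul_sum]
            refine Finset.sum_congr rfl fun i _ => ?_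
            rw [← mul_assoc, ← mul_assoc, ← mul_assoc, hdap,
              mul_assoc (1-a*x) a (a^i), ← pow_succ']
        _ = V - (1-a*x)*a^0*b*x^(0+1+1) := by
            rw [hV]
            exact sum_shift (fun j => (1-a*x)*a^j*b*x^(j+1+1)) k
              (by show (1-a*x)*a^k*b*x^(k+1+1) = 0
                  rw [hdpak k le_rfl, zero_mul, zero_mul])
    have hs1 : a*(x*(x*b*x)) = x*b*x := by
      rw [show x*(x*b*x) = (x*x)*(b*x) by noncomm_ring, ← mul_assoc, h1, ← mul_assoc]
    rw [hxZ, hZx]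
    simp only [mul_add, mul_neg]
    rw [hs1, haU3, haV3]
    simp only [zero_add, pow_zero, pow_one, one_mul, mul_one]
    noncomm_ring
  · -- identity (ii)
    set U := ∑ i ∈ Finset.range k, x^(i+1+1)*b*a^i*(1-a*x) with hU
    set V := ∑ i ∈ Finset.range k, (1-a*x)*a^i*b*x^(i+1+1) with hV
    have hUa : U * a = (∑ i ∈ Finset.range k, x^(i+1)*b*a^i*(1-a*x))
        - x^(0+1)*b*a^0*(1-a*x) := by
      calc U * a = ∑ i ∈ Finset.range k, x^(i+1+1)*b*a^(i+1)*(1-a*x) := by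
            rw [hU, Finset.sum_mul]
            refine Finset.sum_congr rfl fun i _ => ?_
            rw [mul_assoc, ← hdap, ← mul_assoc, mul_assoc (x^(i+1+1)*b) (a^i) a, ← pow_succ]
        _ = _ := sum_shift (fun j => x^(j+1)*b*a^j*(1-a*x)) k
              (by show x^(k+1)*b*a^k*(1-a*x) = 0
                  rw [mul_assoc, hdakp k le_rfl, mul_zero])
    have haU : a * U = ∑ i ∈ Finset.range k, x^(i+1)*b*a^i*(1-a*x) := by
      rw [hU, Finset.mul_sum]
      refine Finset.sum_congr rfl fun i _ => ?_
      rw [← mul_assoc, ← mul_assoc, ← mul_assoc, hdax2 i]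
    have hVa : V * a = ∑ i ∈ Finset.range k, (1-a*x)*a^i*b*x^(i+1) := by
      rw [hV, Finset.sum_mul]
      refine Finset.sum_congr rfl fun i _ => ?_
      rw [mul_assoc, hdxa2 i]
    have haV : a * V = (∑ i ∈ Finset.range k, (1-a*x)*a^i*b*x^(i+1))
        - (1-a*x)*a^0*b*x^(0+1) := by
      calc a * V = ∑ i ∈ Finset.range k, (1-a*x)*a^(i+1)*b*x^(i+1+1) := by
            rw [hV, Finset.mul_sum]
            refine Finset.sum_congr rfl fun i _ => ?_
            rw [← mul_assoc, ← mul_assoc, ← mul_assoc, hdap,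
              mul_assoc (1-a*x) a (a^i), ← pow_succ']
        _ = _ := sum_shift (fun j => (1-a*x)*a^j*b*x^(j+1)) k
              (by show (1-a*x)*a^k*b*x^(k+1) = 0
                  rw [hdpak k le_rfl, zero_mul, zero_mul])
    rw [add_mul, add_mul, neg_mul, hUa, hVa, mul_add, mul_add, mul_neg, haU, haV]
    have e : x*b*x*a = x*b*(a*x) := by rw [mul_assoc (x*b) x a, h2]
    rw [e]
    simp only [zero_add, pow_zero, pow_one, one_mul, mul_one]
    noncomm_ring
  · -- identity (iii)
    set U := ∑ i ∈ Finset.range k, x^(i+1+1)*b*a^i*(1-a*x) with hU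
    set V := ∑ i ∈ Finset.range k, (1-a*x)*a^i*b*x^(i+1+1) with hV
    have hUa : U * a^(2*k+1) = 0 := by
      rw [hU, Finset.sum_mul]
      refine Finset.sum_eq_zero fun i _ => ?_
      rw [mul_assoc, hdpak (2*k+1) (by omega), mul_zero]
    have hVa : V * a^(2*k+1) = ∑ i ∈ Finset.range k, (1-a*x)*a^i*b*a^(2*k-1-i) := by
      rw [hV, Finset.sum_mul]
      refine Finset.sum_congr rfl fun i hi => ?_
      rw [Finset.mem_range] at hi
      rw [mul_assoc, mul_assoc, hdf2 (i+1+1) (2*k+1) (by omega),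
        show 2*k+1-(i+1+1) = 2*k-1-i by omega, ← mul_assoc]
    have hxbxa : x*b*x*a^(2*k+1) = x*b*a^(2*k) := by
      rw [mul_assoc (x*b) x (a^(2*k+1)), hdf1 (2*k) (by omega)]
    have hsum1 : x * (∑ i ∈ Finset.range (2*k+1), a^i*b*a^(2*k+1-1-i))
        = (∑ i ∈ Finset.range (2*k), x*(a^(i+1)*b*a^(2*k-1-i))) + x*b*a^(2*k) := by
      rw [Finset.mul_sum]
      rw [Finset.sum_range_succ' (fun i => x*(a^i*b*a^(2*k+1-1-i))) (2*k)]
      congr 1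
      · refine Finset.sum_congr rfl fun i _ => ?_
        rw [show 2*k+1-1-(i+1) = 2*k-1-i by omega]
      · rw [show 2*k+1-1-0 = 2*k by omega, pow_zero, one_mul, ← mul_assoc]
    have key : (∑ i ∈ Finset.range (2*k), x*(a^(i+1)*b*a^(2*k-1-i)))
        + (∑ i ∈ Finset.range k, (1-a*x)*a^i*b*a^(2*k-1-i))
        = ∑ i ∈ Finset.range (2*k), a^i*b*a^(2*k-1-i) := by
      have h4 : ∀ i ∈ Finset.range (2*k), i ∉ Finset.range k →
          a^i*b*a^(2*k-1-i) - x*(a^(i+1)*b*a^(2*k-1-i)) = 0 := by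
        intro i _ hni
        rw [Finset.mem_range, not_lt] at hni
        rw [← mul_assoc, ← mul_assoc, hdf1 i hni, sub_self]
      have h5 : ∀ i ∈ Finset.range k,
          (1-a*x)*a^i*b*a^(2*k-1-i)
            = a^i*b*a^(2*k-1-i) - x*(a^(i+1)*b*a^(2*k-1-i)) := by
        intro i _
        have e : x*(a^(i+1)*b*a^(2*k-1-i)) = a*x*a^i*b*a^(2*k-1-i) := by
          rw [← mul_assoc, ← mul_assoc, pow_succ', ← mul_assoc, h2]
        rw [e]
        noncomm_ring
      have h6 : ∑ i ∈ Finset.range k,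
            (a^i*b*a^(2*k-1-i) - x*(a^(i+1)*b*a^(2*k-1-i)))
          = ∑ i ∈ Finset.range (2*k),
            (a^i*b*a^(2*k-1-i) - x*(a^(i+1)*b*a^(2*k-1-i))) :=
        Finset.sum_subset (Finset.range_subset_range.2 (by omega)) h4
      rw [Finset.sum_congr rfl h5, h6, Finset.sum_sub_distrib]
      abel
    rw [hsum1, add_mul, add_mul, neg_mul, hxbxa, hUa, hVa, add_zero, ← key]
    abel

section MatrixAux
variable {n : ℕ}

def Dm (A : Matrix (Fin n) (Fin n) ℝ) : Matrix (Fin n) (Fin n) (DualNumber ℝ) :=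
  A.map (fun r => inl r)
def Em (A : Matrix (Fin n) (Fin n) ℝ) : Matrix (Fin n) (Fin n) (DualNumber ℝ) :=
  A.map (fun r => inr r)

attribute [local simp] Matrix.mul_apply Dm Em fst_sum snd_sum fst_mul snd_mul Matrix.one_apply

lemma Dm_mul (A B : Matrix (Fin n) (Fin n) ℝ) : Dm (A*B) = Dm A * Dm B := by
  ext i j <;> simp

lemma Dm_one : (Dm 1 : Matrix (Fin n) (Fin n) (DualNumber ℝ)) = 1 := by
  ext i j <;> simp <;> split <;> simp

lemma Dm_mul_Em (A B : Matrix (Fin n) (Fin n) ℝ) : Dm A * Em B = Em (A*B) := by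
  ext i j <;> simp [mul_comm]

lemma Em_mul_Dm (A B : Matrix (Fin n) (Fin n) ℝ) : Em A * Dm B = Em (A*B) := by
  ext i j <;> simp

lemma Em_mul_Em (A B : Matrix (Fin n) (Fin n) ℝ) : Em A * Em B = 0 := by
  ext i j <;> simp

lemma Em_add (A B : Matrix (Fin n) (Fin n) ℝ) : Em (A + B) = Em A + Em B := by
  ext i j <;> simp

lemma Em_zero : (Em 0 : Matrix (Fin n) (Fin n) (DualNumber ℝ)) = 0 := by
  ext i j <;> simp

lemma DE_mul (P Q P' Q' : Matrix (Fin n) (Fin n) ℝ) :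
    (Dm P + Em Q) * (Dm P' + Em Q') = Dm (P*P') + Em (P*Q' + Q*P') := by
  rw [add_mul, mul_add, mul_add, ← Dm_mul, Dm_mul_Em, Em_mul_Dm, Em_mul_Em, add_zero,
    Em_add, add_assoc]

lemma dual_pow (A B : Matrix (Fin n) (Fin n) ℝ) (N : ℕ) :
    (Dm A + Em B) ^ N = Dm (A^N) + Em (∑ i ∈ Finset.range N, A^i * B * A^(N-1-i)) := by
  induction N with
  | zero => simp only [pow_zero, Dm_one, Finset.range_zero, Finset.sum_empty, Em_zero, add_zero]
  | succ N ih =>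
    rw [pow_succ, ih, DE_mul, ← pow_succ]
    congr 1
    have hSA : (∑ i ∈ Finset.range N, A^i*B*A^(N-1-i)) * A
        = ∑ i ∈ Finset.range N, A^i*B*A^(N+1-1-i) := by
      rw [Finset.sum_mul]
      refine Finset.sum_congr rfl fun i hi => ?_
      rw [Finset.mem_range] at hi
      rw [mul_assoc, ← pow_succ, show N-1-i+1 = N+1-1-i by omega]
    rw [hSA, Finset.sum_range_succ, show N+1-1-N = 0 by omega, pow_zero, mul_one, add_comm]

lemma dualMat_eq (A B : Matrix (Fin n) (Fin n) ℝ) : dualMat A B = Dm A + Em B := rfl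

end MatrixAux


/-- if `k` is the Drazin index of the real matrix `A`, then
`Â^{2k} = A^{2k} + ε (Σ_{i=0}^{2k-1} Aⁱ A₀ A^{2k-1-i})` is regular in `𝔻^{n×n}` and
`Â = A + ε A₀` is Drazin invertible with Drazin index at most `2k`; in particular every
square dual matrix is Drazin invertible. -/
theorem stmt19 {n : ℕ} (A A₀ : Matrix (Fin n) (Fin n) ℝ) (k : ℕ)
    (hk : ∃ X, IsDrazinInverse A X k)
    (hmin : ∀ m : ℕ, (∃ X, IsDrazinInverse A X m) → k ≤ m) :
    (dualMat A A₀) ^ (2 * k) =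
      dualMat (A ^ (2 * k))
        (∑ i ∈ Finset.range (2 * k), A ^ i * A₀ * A ^ (2 * k - 1 - i)) ∧
    (∃ Y, (dualMat A A₀) ^ (2 * k) * Y * (dualMat A A₀) ^ (2 * k)
        = (dualMat A A₀) ^ (2 * k)) ∧
    (∃ X, IsDrazinInverse (dualMat A A₀) X (2 * k)) ∧
    (∃ X m, IsDrazinInverse (dualMat A A₀) X m) := by
  obtain ⟨X, hX1, hX2, hX3⟩ := hk
  obtain ⟨Z, hZ1, hZ2, hZ3⟩ := ring_key A X A₀ k hX1 hX2 hX3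
  have hD : IsDrazinInverse (dualMat A A₀) (Dm X + Em Z) (2*k) := by
    refine ⟨?_, ?_, ?_⟩
    · show (Dm A + Em A₀) * ((Dm X + Em Z) * (Dm X + Em Z)) = Dm X + Em Z
      rw [DE_mul, DE_mul, hX1, hZ1]
    · show (Dm X + Em Z) * (Dm A + Em A₀) = (Dm A + Em A₀) * (Dm X + Em Z)
      rw [DE_mul, DE_mul, hX2, hZ2]
    · show (Dm X + Em Z) * (Dm A + Em A₀) ^ (2*k+1) = (Dm A + Em A₀) ^ (2*k)
      rw [dual_pow A A₀ (2*k+1), dual_pow A A₀ (2*k), DE_mul, hZ3,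
        df1' hX2 hX3 (2*k) (by omega)]
  exact ⟨dual_pow A A₀ (2*k), ⟨(Dm X + Em Z)^(2*k), drazin_reg hD⟩,
    ⟨Dm X + Em Z, hD⟩, ⟨Dm X + Em Z, 2*k, hD⟩⟩
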